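/- Let M be a matroid, let I be an independent set, and let u1, ..., uℓ ∈ cl(I) \ I and v1, ..., vℓ ∈ I be distinct elements such that vi belongs to the fundamental circuit C(ui, I) for each i ∈ [ℓ], and vi ∉ C(uj, I) whenever i < j. Then J := (I ∪ {u1,...,uℓ}) \ {v1,...,vℓ} is independent and cl(I) = cl(J). -/

import Mathlib

/-- A circuit of a matroid is an inclusion-wise minimal dependent set. -/
def Matroid.IsCircuit' {α : Type*} (M : Matroid α) (C : Set α) : Prop :=
  M.Dep C ∧ ∀ ⦃D : Set α⦄, D ⊂ C → M.Indep D

open Set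

lemma Matroid.IsCircuit'.mem_closure_diff {α : Type*} {M : Matroid α} {C : Set α}
    (hC : M.IsCircuit' C) {x : α} (hx : x ∈ C) : x ∈ M.closure (C \ {x}) := by
  have hind : M.Indep (C \ {x}) := hC.2 (sdiff_singleton_ssubset.2 hx)
  have hdep : M.Dep (insert x (C \ {x})) := by
    rw [Set.insert_diff_singleton, Set.insert_eq_self.2 hx]; exact hC.1
  exact (hind.insert_dep_iff.mp hdep).1

lemma exchange_one {α : Type*} {M : Matroid α} {I C : Set α} {u v : α} (hI : M.Indep I)
    (hu : u ∈ M.closure I \ I) (hv : v ∈ I) (hCc : M.IsCircuit' C) (huC : u ∈ C)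
    (hCI : C ⊆ insert u I) (hvC : v ∈ C) :
    M.Indep (insert u (I \ {v})) ∧ M.closure I = M.closure (insert u (I \ {v})) := by
  have hIv : M.Indep (I \ {v}) := hI.subset diff_subset
  have hCv : C \ {v} ⊆ insert u (I \ {v}) := by
    rintro x ⟨hxC, hxv⟩
    rcases hCI hxC with h | h
    · exact Or.inl h
    · exact Or.inr ⟨h, hxv⟩
  have hvclo : v ∈ M.closure (insert u (I \ {v})) :=
    M.closure_subset_closure hCv (hCc.mem_closure_diff hvC)
  have hunot : u ∉ M.closure (I \ {v}) := by
    intro hucl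
    have hv2 : v ∈ M.closure (I \ {v}) := by
      rwa [Matroid.closure_insert_eq_of_mem_closure hucl] at hvclo
    have hdep : M.Dep (insert v (I \ {v})) :=
      hIv.insert_dep_iff.mpr ⟨hv2, by simp⟩
    rw [Set.insert_diff_singleton, Set.insert_eq_self.2 hv] at hdep
    exact hdep.not_indep hI
  have huE : u ∈ M.E := M.closure_subset_ground I hu.1
  have hind : M.Indep (insert u (I \ {v})) := by
    rw [hIv.insert_indep_iff_of_notMem (fun h => hu.2 h.1)]
    exact ⟨huE, hunot⟩
  refine ⟨hind, le_antisymm ?_ ?_⟩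
  · apply Matroid.closure_subset_closure_of_subset_closure
    intro x hxI
    by_cases hxv : x = v
    · exact hxv ▸ hvclo
    · exact M.mem_closure_of_mem (mem_insert_of_mem _ ⟨hxI, hxv⟩) hind.subset_ground
  · apply Matroid.closure_subset_closure_of_subset_closure
    rintro x (rfl | hx)
    · exact hu.1
    · exact M.mem_closure_of_mem hx.1 hI.subset_ground

lemma range_fin_succ {α : Type*} {n : ℕ} (f : Fin (n + 1) → α) :
    Set.range f = insert (f 0) (Set.range (f ∘ Fin.succ)) := by
  ext x
  constructor
  · rintro ⟨i, rfl⟩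
    induction i using Fin.cases with
    | zero => exact Or.inl rfl
    | succ j => exact Or.inr ⟨j, rfl⟩
  · rintro (rfl | ⟨j, rfl⟩)
    · exact ⟨0, rfl⟩
    · exact ⟨j.succ, rfl⟩

lemma iri_tomizawa_aux {α : Type*} (M : Matroid α) : ∀ (ℓ : ℕ) (I : Set α),
    M.Indep I → ∀ (u v : Fin ℓ → α),
    (∀ i, u i ∈ M.closure I \ I) → (∀ i, v i ∈ I) →
    Function.Injective u → Function.Injective v →
    ∀ (C : Fin ℓ → Set α),
    (∀ i, M.IsCircuit' (C i) ∧ u i ∈ C i ∧ C i ⊆ insert (u i) I) →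
    (∀ i, v i ∈ C i) →
    (∀ i j : Fin ℓ, i < j → v i ∉ C j) →
    M.Indep ((I ∪ Set.range u) \ Set.range v) ∧
      M.closure I = M.closure ((I ∪ Set.range u) \ Set.range v) := by
  intro ℓ
  induction ℓ with
  | zero =>
    intro I hI u v _ _ _ _ C _ _ _
    simp [Set.range_eq_empty, hI]
  | succ n ih =>
    intro I hI u v hu hv hu_inj hv_inj C hC h1 h2
    set I' := insert (u 0) (I \ {v 0}) with hI'def
    obtain ⟨hI'ind, hI'cl⟩ :=
      exchange_one hI (hu 0) (hv 0) (hC 0).1 (hC 0).2.1 (hC 0).2.2 (h1 0)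
    have hu0I : u 0 ∉ I := (hu 0).2
    have huI : ∀ i, u i ∉ I := fun i => (hu i).2
    -- hypotheses for the inductive step
    have hu' : ∀ i : Fin n, u i.succ ∈ M.closure I' \ I' := by
      intro i
      refine ⟨hI'cl ▸ (hu i.succ).1, ?_⟩
      rintro (h | h)
      · exact (Fin.succ_ne_zero i) (hu_inj h)
      · exact (hu i.succ).2 h.1
    have hv' : ∀ i : Fin n, v i.succ ∈ I' := by
      intro i
      exact Or.inr ⟨hv i.succ, fun h => (Fin.succ_ne_zero i) (hv_inj h)⟩
    have hC' : ∀ i : Fin n, M.IsCircuit' (C i.succ) ∧ u i.succ ∈ C i.succ ∧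
        C i.succ ⊆ insert (u i.succ) I' := by
      intro i
      refine ⟨(hC i.succ).1, (hC i.succ).2.1, ?_⟩
      intro x hx
      rcases (hC i.succ).2.2 hx with h | h
      · exact Or.inl h
      · refine Or.inr (Or.inr ⟨h, ?_⟩)
        rintro rfl
        exact h2 0 i.succ (Fin.succ_pos i) hx
    obtain ⟨hJind, hJcl⟩ := ih I' hI'ind (u ∘ Fin.succ) (v ∘ Fin.succ) hu' hv'
      (hu_inj.comp (Fin.succ_injective n)) (hv_inj.comp (Fin.succ_injective n))
      (C ∘ Fin.succ) hC' (fun i => h1 i.succ)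
      (fun i j hij => h2 i.succ j.succ (Fin.succ_lt_succ_iff.mpr hij))
    have hset : (I' ∪ Set.range (u ∘ Fin.succ)) \ Set.range (v ∘ Fin.succ) =
        (I ∪ Set.range u) \ Set.range v := by
      rw [range_fin_succ u, range_fin_succ v]
      ext x
      simp only [hI'def, Set.mem_diff, Set.mem_union, Set.mem_insert_iff,
        Set.mem_singleton_iff]
      constructor
      · rintro ⟨h, hxv'⟩
        have hxne : x ≠ v 0 := by
          rcases h with ((rfl | ⟨hxI, hne⟩) | ⟨i, rfl⟩)
          · exact fun h => hu0I (h ▸ hv 0)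
          · exact hne
          · intro h
            exact huI i.succ (show u i.succ ∈ I by
              rw [show u i.succ = v 0 from h]; exact hv 0)
        refine ⟨?_, fun h => h.elim hxne hxv'⟩
        rcases h with ((rfl | ⟨hxI, _⟩) | ⟨i, rfl⟩)
        · exact Or.inr (Or.inl rfl)
        · exact Or.inl hxI
        · exact Or.inr (Or.inr ⟨i, rfl⟩)
      · rintro ⟨h, hxv⟩
        push_neg at hxv
        refine ⟨?_, hxv.2⟩
        rcases h with hxI | (rfl | hxu)
        · exact Or.inl (Or.inr ⟨hxI, hxv.1⟩)
        · exact Or.inl (Or.inl rfl)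
        · exact Or.inr hxu
    rw [hset] at hJind hJcl
    exact ⟨hJind, hI'cl.trans hJcl⟩

/-- Iri–Tomizawa exchange lemma: given distinct elements
`u₁, …, u_ℓ ∈ cl(I) \ I` and `v₁, …, v_ℓ ∈ I` with `vᵢ ∈ C(uᵢ, I)` for all `i`
and `vᵢ ∉ C(uⱼ, I)` for `i < j`, the set
`J = (I ∪ {u₁, …, u_ℓ}) \ {v₁, …, v_ℓ}` is independent and `cl(I) = cl(J)`.
Here `C i` is the fundamental circuit of `uᵢ` and `I`. -/
theorem iri_tomizawa_sequence {α : Type*} (M : Matroid α) (I : Set α)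
    (hI : M.Indep I) (ℓ : ℕ) (u v : Fin ℓ → α)
    (hu : ∀ i, u i ∈ M.closure I \ I) (hv : ∀ i, v i ∈ I)
    (hu_inj : Function.Injective u) (hv_inj : Function.Injective v)
    (C : Fin ℓ → Set α)
    (hC : ∀ i, M.IsCircuit' (C i) ∧ u i ∈ C i ∧ C i ⊆ insert (u i) I)
    (h1 : ∀ i, v i ∈ C i)
    (h2 : ∀ i j : Fin ℓ, i < j → v i ∉ C j) :
    M.Indep ((I ∪ Set.range u) \ Set.range v) ∧
      M.closure I = M.closure ((I ∪ Set.range u) \ Set.range v) := by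
  exact iri_tomizawa_aux M ℓ I hI u v hu hv hu_inj hv_inj C hC h1 h2
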